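/- Let g : ℝⁿ → ℝᵐ be twice continuously differentiable with ‖g″(x)‖ ≤ M for all x ∈ ℝⁿ, where ‖g″(x)‖ is the operator norm of the second Fréchet derivative of g at x as a bilinear map. Let u > 0, Δt > 0, and set δ = √u / Δt. Let y, d ∈ ℝⁿ and r ∈ ℝᵐ satisfy ‖d‖ ≤ D·Δt and ‖r‖ ≤ R·u for constants D, R ≥ 0. Then ‖ δ⁻¹ ( g(y + δ d) + r − g(y) ) − g′(y) d ‖ ≤ ( M D²/2 + R ) · √u · Δt, where g′(y) denotes the Fréchet derivative of g at y. -/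

import Mathlib

open Set

lemma taylor_quad_bound {E F : Type*} [NormedAddCommGroup E] [NormedSpace ℝ E]
    [NormedAddCommGroup F] [NormedSpace ℝ F]
    (g : E → F) (hg : ContDiff ℝ 2 g) (M : ℝ)
    (hM : ∀ x, ‖iteratedFDeriv ℝ 2 g x‖ ≤ M) (y h : E) :
    ‖g (y + h) - g y - fderiv ℝ g y h‖ ≤ M / 2 * ‖h‖ ^ 2 := by
  have hdg : Differentiable ℝ g := hg.differentiable two_ne_zero
  have hdg' : Differentiable ℝ (fderiv ℝ g) :=
    (hg.fderiv_right (m := 1) le_rfl).differentiable one_ne_zero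
  have hM0 : 0 ≤ M := le_trans (norm_nonneg _) (hM y)
  have hnorm2 : ∀ x, ‖fderiv ℝ (fderiv ℝ g) x‖ ≤ M := by
    intro x
    calc ‖fderiv ℝ (fderiv ℝ g) x‖
        = ‖iteratedFDeriv ℝ 0 (fderiv ℝ (fderiv ℝ g)) x‖ := by rw [norm_iteratedFDeriv_zero]
      _ = ‖iteratedFDeriv ℝ 1 (fderiv ℝ g) x‖ := norm_iteratedFDeriv_fderiv
      _ = ‖iteratedFDeriv ℝ 2 g x‖ := norm_iteratedFDeriv_fderiv
      _ ≤ M := hM x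
  have hLip : ∀ a b : E, ‖fderiv ℝ g a - fderiv ℝ g b‖ ≤ M * ‖a - b‖ := fun a b =>
    Convex.norm_image_sub_le_of_norm_fderiv_le (fun x _ => hdg' x)
      (fun x _ => hnorm2 x) convex_univ (mem_univ b) (mem_univ a)
  set v := fderiv ℝ g y h with hv
  set φ : ℝ → F := fun t => g (y + t • h) - g y - t • v with hφ
  have hline : ∀ t : ℝ, HasDerivAt (fun s : ℝ => y + s • h) h t := by
    intro t
    simpa using ((hasDerivAt_id t).smul_const h).const_add y
  have hφ' : ∀ t : ℝ, HasDerivAt φ (fderiv ℝ g (y + t • h) h - v) t := by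
    intro t
    have h1 : HasDerivAt (fun s : ℝ => g (y + s • h)) (fderiv ℝ g (y + t • h) h) t :=
      (hdg (y + t • h)).hasFDerivAt.comp_hasDerivAt t (hline t)
    have h2 : HasDerivAt (fun s : ℝ => s • v) v t := by
      simpa using (hasDerivAt_id t).smul_const v
    exact (h1.sub_const (g y)).sub h2
  have key : ∀ x ∈ Icc (0:ℝ) 1, ‖φ x‖ ≤ M * ‖h‖ ^ 2 * x ^ 2 / 2 := by
    refine image_norm_le_of_norm_deriv_right_le_deriv_boundary
      (f' := fun t => fderiv ℝ g (y + t • h) h - v)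
      (B := fun t => M * ‖h‖ ^ 2 * t ^ 2 / 2) (B' := fun t => M * ‖h‖ ^ 2 * t)
      (fun t _ => (hφ' t).continuousAt.continuousWithinAt)
      (fun t _ => (hφ' t).hasDerivWithinAt) (by simp [hφ]) (fun t => ?_) ?_
    · have := ((hasDerivAt_pow 2 t).const_mul (M * ‖h‖ ^ 2)).div_const 2
      refine this.congr_deriv ?_
      push_cast
      ring
    · intro t ht
      have h1 : ‖fderiv ℝ g (y + t • h) h - v‖
          ≤ ‖fderiv ℝ g (y + t • h) - fderiv ℝ g y‖ * ‖h‖ := by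
        rw [hv, ← ContinuousLinearMap.sub_apply]
        exact (fderiv ℝ g (y + t • h) - fderiv ℝ g y).le_opNorm h
      have h2 : ‖fderiv ℝ g (y + t • h) - fderiv ℝ g y‖ ≤ M * (t * ‖h‖) := by
        have := hLip (y + t • h) y
        simpa [norm_smul, abs_of_nonneg ht.1] using this
      calc ‖fderiv ℝ g (y + t • h) h - v‖ ≤ M * (t * ‖h‖) * ‖h‖ :=
            h1.trans (mul_le_mul_of_nonneg_right h2 (norm_nonneg h))
        _ = M * ‖h‖ ^ 2 * t := by ring
  have := key 1 (by norm_num)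
  simpa [hφ, hv] using this.trans_eq (by ring)

/-- low-precision Jacobian approximation estimate: the difference quotient
with step `δ = √u/Δt` applied to a perturbed evaluation of `g` approximates the directional
derivative `g′(y)d` with error at most `(M D²/2 + R) √u Δt`. -/
theorem jacobian_difference_quotient_estimate
    {n m : ℕ} (g : EuclideanSpace ℝ (Fin n) → EuclideanSpace ℝ (Fin m))
    (hg : ContDiff ℝ 2 g) (M : ℝ) (hM : ∀ x, ‖iteratedFDeriv ℝ 2 g x‖ ≤ M)
    (u Δt : ℝ) (hu : 0 < u) (hΔt : 0 < Δt)
    (δ : ℝ) (hδ : δ = Real.sqrt u / Δt)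
    (y d : EuclideanSpace ℝ (Fin n)) (r : EuclideanSpace ℝ (Fin m))
    (D R : ℝ) (hD : 0 ≤ D) (hR : 0 ≤ R)
    (hd : ‖d‖ ≤ D * Δt) (hr : ‖r‖ ≤ R * u) :
    ‖δ⁻¹ • (g (y + δ • d) + r - g y) - fderiv ℝ g y d‖ ≤
      (M * D ^ 2 / 2 + R) * Real.sqrt u * Δt := by
  have hM0 : 0 ≤ M := le_trans (norm_nonneg _) (hM y)
  set s := Real.sqrt u with hs
  have hs0 : 0 < s := Real.sqrt_pos.2 hu
  have hs2 : s ^ 2 = u := Real.sq_sqrt hu.le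
  have hδ0 : 0 < δ := by rw [hδ]; positivity
  set h : EuclideanSpace ℝ (Fin n) := δ • d with hh
  have hT := taylor_quad_bound g hg M hM y h
  set T := g (y + h) - g y - fderiv ℝ g y h with hTdef
  have hsplit : δ⁻¹ • (g (y + δ • d) + r - g y) - fderiv ℝ g y d
      = δ⁻¹ • T + δ⁻¹ • r := by
    have hmap : fderiv ℝ g y h = δ • fderiv ℝ g y d := by
      rw [hh]; exact (fderiv ℝ g y).map_smul δ d
    rw [hTdef, hmap, ← hh]
    rw [smul_sub, smul_sub, smul_add, smul_smul, inv_mul_cancel₀ hδ0.ne', one_smul]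
    module
  have hnh : ‖h‖ ≤ δ * (D * Δt) := by
    rw [hh, norm_smul, Real.norm_eq_abs, abs_of_pos hδ0]
    exact mul_le_mul_of_nonneg_left hd hδ0.le
  have h1 : ‖δ⁻¹ • T‖ ≤ δ⁻¹ * (M / 2 * (δ * (D * Δt)) ^ 2) := by
    rw [norm_smul, Real.norm_eq_abs, abs_of_pos (inv_pos.2 hδ0)]
    refine mul_le_mul_of_nonneg_left (hT.trans ?_) (inv_pos.2 hδ0).le
    exact mul_le_mul_of_nonneg_left (pow_le_pow_left₀ (norm_nonneg _) hnh 2) (by linarith)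
  have h2 : ‖δ⁻¹ • r‖ ≤ δ⁻¹ * (R * u) := by
    rw [norm_smul, Real.norm_eq_abs, abs_of_pos (inv_pos.2 hδ0)]
    exact mul_le_mul_of_nonneg_left hr (inv_pos.2 hδ0).le
  have e1 : δ⁻¹ * (M / 2 * (δ * (D * Δt)) ^ 2) = M * D ^ 2 / 2 * s * Δt := by
    rw [hδ]
    field_simp
  have e2 : δ⁻¹ * (R * u) = R * s * Δt := by
    rw [hδ, ← hs2]
    field_simp
  calc ‖δ⁻¹ • (g (y + δ • d) + r - g y) - fderiv ℝ g y d‖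
      = ‖δ⁻¹ • T + δ⁻¹ • r‖ := by rw [hsplit]
    _ ≤ ‖δ⁻¹ • T‖ + ‖δ⁻¹ • r‖ := norm_add_le _ _
    _ ≤ δ⁻¹ * (M / 2 * (δ * (D * Δt)) ^ 2) + δ⁻¹ * (R * u) := add_le_add h1 h2
    _ = (M * D ^ 2 / 2 + R) * s * Δt := by rw [e1, e2]; ring
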